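/- Let A be an n×n complex Hermitian matrix and let C be an n×n positive semidefinite Hermitian matrix. Let A₀ denote the positive part of A, i.e. A₀ is obtained from the spectral decomposition of A by setting all negative eigenvalues to zero (equivalently, A₀ = f(A) via the continuous functional calculus with f(x) = max(x,0)). Then the ℓ²-operator norm satisfies ‖A₀ − C‖ ≤ 2 ‖A − C‖. -/

import Mathlib

open scoped Matrix.Norms.L2Operator ComplexOrder

set_option maxHeartbeats 1000000
set_option synthInstance.maxHeartbeats 200000

/-- In a unital C⋆-algebra with its natural order, replacing a selfadjoint element by its
positive part at most doubles the distance to any nonnegative element. -/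
lemma posPart_sub_norm_le_two_mul {𝔄 : Type*} [CStarAlgebra 𝔄] [PartialOrder 𝔄]
    [StarOrderedRing 𝔄] (a c : 𝔄) (ha : IsSelfAdjoint a) (hc : 0 ≤ c) :
    ‖cfc (fun x : ℝ => max x 0) a - c‖ ≤ 2 * ‖a - c‖ := by
  have hc' : IsSelfAdjoint c := .of_nonneg hc
  have hac : IsSelfAdjoint (a - c) := ha.sub hc'
  have hmax : (fun x : ℝ => max x 0) = (fun x : ℝ => x⁺) := by
    funext x
    simp [posPart_def]
  have hpos : cfc (fun x : ℝ => max x 0) a = a⁺ := by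
    rw [hmax, CFC.posPart_def, cfcₙ_eq_cfc]
  -- lower bound on the spectrum of `a`
  have h1 : algebraMap ℝ 𝔄 (-‖a - c‖) ≤ a := by
    calc algebraMap ℝ 𝔄 (-‖a - c‖) ≤ a - c := by
          simpa using hac.neg_algebraMap_norm_le_self
      _ ≤ a := sub_le_self a hc
  have h2 : ∀ x ∈ spectrum ℝ a, -‖a - c‖ ≤ x :=
    (algebraMap_le_iff_le_spectrum (a := a) ha).mp h1
  -- hence the negative part of `a` is small
  have h3 : a⁻ ≤ algebraMap ℝ 𝔄 ‖a - c‖ := by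
    rw [CFC.negPart_def, cfcₙ_eq_cfc]
    refine cfc_le_algebraMap _ _ _ fun x hx => ?_
    have := h2 x hx
    simp only [negPart_def, sup_le_iff]
    exact ⟨by linarith, norm_nonneg _⟩
  have h4 : ‖a⁻‖ ≤ ‖a - c‖ :=
    (CStarAlgebra.norm_le_iff_le_algebraMap _ (norm_nonneg _) (CFC.negPart_nonneg a)).mpr h3
  have h5 : a⁺ - c = (a - c) + a⁻ := by
    have h := eq_add_of_sub_eq (CFC.posPart_sub_negPart a ha)
    rw [h]; abel
  calc ‖cfc (fun x : ℝ => max x 0) a - c‖ = ‖(a - c) + a⁻‖ := by rw [hpos, h5]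
    _ ≤ ‖a - c‖ + ‖a⁻‖ := norm_add_le _ _
    _ ≤ ‖a - c‖ + ‖a - c‖ := by linarith
    _ = 2 * ‖a - c‖ := by ring

/-- Replacing a Hermitian matrix `A` by its positive part `A₀` (obtained from the spectral
decomposition of `A` by setting all negative eigenvalues to zero, i.e. `A₀ = f(A)` with
`f x = max x 0` via the functional calculus) at most doubles the `ℓ²`-operator-norm distance
to any positive semidefinite matrix `C`: `‖A₀ - C‖ ≤ 2 ‖A - C‖`. -/
theorem positive_part_l2_opNorm_bound {n : ℕ} (A C : Matrix (Fin n) (Fin n) ℂ)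
    (hA : A.IsHermitian) (hC : C.PosSemidef) :
    ‖hA.cfc (fun x => max x 0) - C‖ ≤ 2 * ‖A - C‖ := by
  have hA' : IsSelfAdjoint A := hA
  let φ := Matrix.toEuclideanCLM (n := Fin n) (𝕜 := ℂ)
  have hcfc : hA.cfc (fun x => max x 0) = cfc (fun x : ℝ => max x 0) A :=
    (hA.cfc_eq _).symm
  have hφA : IsSelfAdjoint (φ A) := hA'.map φ
  have hφC : (0 : EuclideanSpace ℂ (Fin n) →L[ℂ] EuclideanSpace ℂ (Fin n)) ≤ φ C := by
    obtain ⟨B, rfl⟩ : ∃ B : Matrix (Fin n) (Fin n) ℂ, C = B.conjTranspose * B := by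
      open scoped MatrixOrder in exact CStarAlgebra.nonneg_iff_eq_star_mul_self.mp (Matrix.nonneg_iff_posSemidef.mpr hC)
    rw [← Matrix.star_eq_conjTranspose, map_mul, map_star]
    exact star_mul_self_nonneg (φ B)
  have hφcont : Continuous φ :=
    LinearMap.continuous_of_finiteDimensional (LinearMapClass.linearMap φ)
  have hmap : φ (cfc (fun x : ℝ => max x 0) A) = cfc (fun x : ℝ => max x 0) (φ A) :=
    StarAlgHomClass.map_cfc (S := ℂ) φ _ A (hφ := hφcont)
  calc ‖hA.cfc (fun x => max x 0) - C‖
      = ‖φ (hA.cfc (fun x => max x 0) - C)‖ := Matrix.cstar_norm_def _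
    _ = ‖cfc (fun x : ℝ => max x 0) (φ A) - φ C‖ := by rw [map_sub, hcfc, hmap]
    _ ≤ 2 * ‖φ A - φ C‖ := posPart_sub_norm_le_two_mul _ _ hφA hφC
    _ = 2 * ‖φ (A - C)‖ := by rw [map_sub]
    _ = 2 * ‖A - C‖ := by rw [← Matrix.cstar_norm_def]
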